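/- Let m, ℓ be integers with 1 ≤ m ≤ 2ℓ ≤ 2m, and let ℛ be the set of standard Young tableaux with two rows of lengths ℓ and m − ℓ whose entries are exactly 1, …, m. For R ∈ ℛ define the 2ℓ-covector α_R on ℝ^{2m} as in the product formula α_R := ∏(dxy_{R¹_j} − dxy_{R²_j}) for j ≤ m−ℓ, wedged with dxy_{R¹_j} for m−ℓ < j ≤ ℓ. Then the family {α_R : R ∈ ℛ} is linearly independent. -/

import Mathlib

set_option synthInstance.maxHeartbeats 1000000

/-- A standard Young tableau with two rows of lengths `ℓ` and `m - ℓ`, filled with the entries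
`1, …, m` (here `Fin m`), each appearing exactly once: entries strictly increase along each row
and down each column. -/
structure StdYoungTableau (m ℓ : ℕ) where
  /-- the first row -/
  r1 : Fin ℓ → Fin m
  /-- the second row -/
  r2 : Fin (m - ℓ) → Fin m
  /-- entries increase along the first row -/
  mono1 : StrictMono r1
  /-- entries increase along the second row -/
  mono2 : StrictMono r2
  /-- entries increase down each column -/
  col : ∀ (i : Fin ℓ) (j : Fin (m - ℓ)), (i : ℕ) = (j : ℕ) → r1 i < r2 j
  /-- all entries are distinct (hence, by counting, each of `1, …, m` appears exactly once) -/
  inj : Function.Injective (Sum.elim r1 r2)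

/-- The space of covectors: the dual of `ℝ^{2m}`. -/
abbrev CovectorSpace (m : ℕ) : Type _ :=
  Module.Dual ℝ ((Fin m → ℝ) × (Fin m → ℝ))

/-- The coordinate covector `dx_i`. -/
noncomputable def dxCov (m : ℕ) (i : Fin m) : CovectorSpace m :=
  (LinearMap.proj i).comp (LinearMap.fst ℝ (Fin m → ℝ) (Fin m → ℝ))

/-- The coordinate covector `dy_i`. -/
noncomputable def dyCov (m : ℕ) (i : Fin m) : CovectorSpace m :=
  (LinearMap.proj i).comp (LinearMap.snd ℝ (Fin m → ℝ) (Fin m → ℝ))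

/-- The 2-covector `dxy_i := dx_i ∧ dy_i`. -/
noncomputable def dxyCov (m : ℕ) (i : Fin m) : ExteriorAlgebra ℝ (CovectorSpace m) :=
  ExteriorAlgebra.ι ℝ (dxCov m i) * ExteriorAlgebra.ι ℝ (dyCov m i)

/-- The `2ℓ`-covector `α_R` associated with a two-row tableau `R`. -/
noncomputable def alphaCov (m ℓ : ℕ) (R : StdYoungTableau m ℓ) :
    ExteriorAlgebra ℝ (CovectorSpace m) :=
  (List.ofFn fun j : Fin ℓ =>
    if h : (j : ℕ) < m - ℓ then dxyCov m (R.r1 j) - dxyCov m (R.r2 ⟨(j : ℕ), h⟩)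
    else dxyCov m (R.r1 j)).prod

noncomputable section
namespace AlphaPf
open ExteriorAlgebra

/-! ### Generic list-product lemmas in a ring -/

variable {A : Type*} [Ring A] [Algebra ℝ A]

lemma prod_ofFn_add : ∀ {n : ℕ} (h : Fin n → Bool → A),
    (List.ofFn fun j => h j true + h j false).prod
      = ∑ c : Fin n → Bool, (List.ofFn fun j => h j (c j)).prod := by
  intro n
  induction n with
  | zero => intro h; simp
  | succ n ih =>
    intro h
    have e1 := Equiv.sum_comp (Fin.consEquiv fun _ : Fin (n+1) => Bool)
      (fun c : Fin (n+1) → Bool => (List.ofFn fun j => h j (c j)).prod)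
    simp only [Fin.consEquiv_apply] at e1
    rw [← e1, Fintype.sum_prod_type]
    simp only [List.ofFn_succ, List.prod_cons, Fin.cons_zero, Fin.cons_succ]
    rw [Fintype.sum_bool]
    rw [ih (fun j b => h j.succ b)]
    rw [← Finset.mul_sum, ← Finset.mul_sum, ← add_mul]

lemma prod_ofFn_smul : ∀ {n : ℕ} (r : Fin n → ℝ) (x : Fin n → A),
    (List.ofFn fun j => r j • x j).prod = (∏ j, r j) • (List.ofFn x).prod := by
  intro n
  induction n with
  | zero => intro r x; simp
  | succ n ih =>
    intro r x
    rw [List.ofFn_succ, List.prod_cons, List.ofFn_succ, List.prod_cons,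
      ih (fun j => r j.succ) (fun j => x j.succ), Fin.prod_univ_succ]
    rw [smul_mul_assoc, mul_smul_comm, smul_smul]

/-! ### Test vectors and evaluation -/

variable {m : ℕ}

def exV (m : ℕ) (a : Fin m) : (Fin m → ℝ) × (Fin m → ℝ) := (Pi.single a 1, 0)
def eyV (m : ℕ) (a : Fin m) : (Fin m → ℝ) × (Fin m → ℝ) := (0, Pi.single a 1)

@[simp] lemma dx_exV (i a : Fin m) : dxCov m i (exV m a) = if i = a then 1 else 0 := by
  simp [dxCov, exV, Pi.single_apply]

@[simp] lemma dx_eyV (i a : Fin m) : dxCov m i (eyV m a) = 0 := by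
  simp [dxCov, eyV]

@[simp] lemma dy_exV (i a : Fin m) : dyCov m i (exV m a) = 0 := by
  simp [dyCov, exV]

@[simp] lemma dy_eyV (i a : Fin m) : dyCov m i (eyV m a) = if i = a then 1 else 0 := by
  simp [dyCov, eyV, Pi.single_apply]

/-! ### Interleaving -/

def itl {α : Type*} {n : ℕ} (p q : Fin n → α) (t : Fin (2*n)) : α :=
  if (t : ℕ) % 2 = 0 then p ⟨(t:ℕ)/2, by have := t.isLt; omega⟩
  else q ⟨(t:ℕ)/2, by have := t.isLt; omega⟩

def pairEquiv (n : ℕ) : Fin n × Fin 2 ≃ Fin (2*n) where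
  toFun x := ⟨2 * x.1 + x.2, by have := x.1.isLt; have := x.2.isLt; omega⟩
  invFun t := (⟨(t:ℕ)/2, by have := t.isLt; omega⟩, ⟨(t:ℕ) % 2, by omega⟩)
  left_inv := by
    rintro ⟨⟨a, ha⟩, ⟨b, hb⟩⟩
    simp only [Prod.mk.injEq, Fin.ext_iff]
    omega
  right_inv := by
    rintro ⟨t, ht⟩
    simp only [Fin.ext_iff]
    omega

lemma itl_pairEquiv {α : Type*} {n : ℕ} (p q : Fin n → α) (j : Fin n) (b : Fin 2) :
    itl p q (pairEquiv n (j, b)) = if (b : ℕ) = 0 then p j else q j := by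
  rcases b with ⟨bv, hb⟩
  interval_cases bv
  · rw [if_pos rfl]
    simp only [itl, pairEquiv, Equiv.coe_fn_mk]
    simp only [eq_true (show (2 * (j:ℕ) + 0) % 2 = 0 by omega), ↓reduceIte]
    congr 1
    simp only [Fin.ext_iff]
    omega
  · rw [if_neg (by norm_num)]
    simp only [itl, pairEquiv, Equiv.coe_fn_mk]
    simp only [eq_false (show ¬ ((2 * (j:ℕ) + 1) % 2 = 0) by omega), ↓reduceIte]
    congr 1
    simp only [Fin.ext_iff]
    omega

lemma itl_succ {α : Type*} {n : ℕ} (p q : Fin (n+1) → α) :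
    itl p q = Fin.cons (p 0) (Fin.cons (q 0)
      (itl (fun j => p j.succ) (fun j => q j.succ))) := by
  funext t
  rcases t with ⟨tv, ht⟩
  match tv, ht with
  | 0, ht =>
    show itl p q ⟨0, ht⟩ = p 0
    simp [itl]
  | 1, ht =>
    show itl p q ⟨1, ht⟩ = q 0
    simp [itl]
  | (v+2), ht =>
    show itl p q ⟨v+2, ht⟩ = itl (fun j => p j.succ) (fun j => q j.succ) ⟨v, by omega⟩
    simp only [itl]
    rcases Nat.even_or_odd v with ⟨w, rfl⟩ | ⟨w, rfl⟩
    · rw [if_pos (by omega), if_pos (by omega)]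
      congr 1
      simp only [Fin.ext_iff, Fin.val_succ]
      omega
    · rw [if_neg (by omega), if_neg (by omega)]
      congr 1
      simp only [Fin.ext_iff, Fin.val_succ]
      omega

lemma prod_pairs {W : Type*} [AddCommGroup W] [Module ℝ W] :
    ∀ {n : ℕ} (p q : Fin n → W),
    (List.ofFn fun j => ι ℝ (p j) * ι ℝ (q j)).prod = ιMulti ℝ (2*n) (itl p q) := by
  intro n
  induction n with
  | zero =>
    intro p q
    show _ = ιMulti ℝ 0 (itl p q)
    simp
  | succ n ih =>
    intro p q
    rw [List.ofFn_succ, List.prod_cons, ih, itl_succ]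
    show ι ℝ (p 0) * ι ℝ (q 0) *
        ιMulti ℝ (2*n) (itl (fun j => p j.succ) (fun j => q j.succ))
      = ιMulti ℝ ((2*n+1)+1) (Fin.cons (p 0) (Fin.cons (q 0)
          (itl (fun j => p j.succ) (fun j => q j.succ))))
    rw [ιMulti_succ_apply]
    simp only [Matrix.vecTail, Function.comp_def, Fin.cons_succ, Fin.cons_zero]
    rw [ιMulti_succ_apply]
    simp only [Matrix.vecTail, Function.comp_def, Fin.cons_succ, Fin.cons_zero]
    rw [mul_assoc]

/-! ### The detecting functional -/

def evalAt {k : ℕ} (v : Fin k → (Fin m → ℝ) × (Fin m → ℝ)) :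
    CovectorSpace m →ₗ[ℝ] (Fin k → ℝ) where
  toFun f := fun t => f (v t)
  map_add' := by intros; ext; simp
  map_smul' := by intros; ext; simp

def detF {k : ℕ} (v : Fin k → (Fin m → ℝ) × (Fin m → ℝ)) :
    (CovectorSpace m) [⋀^Fin k]→ₗ[ℝ] ℝ :=
  (Matrix.detRowAlternating).compLinearMap (evalAt v)

lemma detF_apply {k : ℕ} (v : Fin k → (Fin m → ℝ) × (Fin m → ℝ))
    (f : Fin k → CovectorSpace m) :
    detF v f = Matrix.det (Matrix.of fun t u => f t (v u)) := rfl

def Gfam {k : ℕ} (v : Fin k → (Fin m → ℝ) × (Fin m → ℝ)) :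
    ∀ i, (CovectorSpace m) [⋀^Fin i]→ₗ[ℝ] ℝ :=
  fun i => if h : i = k then (detF v).domDomCongr (finCongr h.symm) else 0

def phi {k : ℕ} (v : Fin k → (Fin m → ℝ) × (Fin m → ℝ)) :
    ExteriorAlgebra ℝ (CovectorSpace m) →ₗ[ℝ] ℝ :=
  liftAlternating (Gfam v)

lemma phi_ιMulti {k : ℕ} (v : Fin k → (Fin m → ℝ) × (Fin m → ℝ))
    (f : Fin k → CovectorSpace m) :
    phi v (ιMulti ℝ k f) = detF v f := by
  rw [phi, liftAlternating_apply_ιMulti]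
  simp [Gfam]

/-- the test vector family attached to an enumeration `a` -/
def vA {ℓ : ℕ} (a : Fin ℓ → Fin m) : Fin (2*ℓ) → (Fin m → ℝ) × (Fin m → ℝ) :=
  itl (fun i => exV m (a i)) (fun i => eyV m (a i))

/-- The key determinant computation. -/
lemma phi_monomial {ℓ : ℕ} (s a : Fin ℓ → Fin m)
    (hs : Function.Injective s) (ha : Function.Injective a) :
    phi (vA a) ((List.ofFn fun j => dxyCov m (s j)).prod)
      = if Finset.image s Finset.univ = Finset.image a Finset.univ then 1 else 0 := by
  have h1 : (List.ofFn fun j => dxyCov m (s j)).prod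
      = ιMulti ℝ (2*ℓ) (itl (fun j => dxCov m (s j)) (fun j => dyCov m (s j))) :=
    prod_pairs _ _
  rw [h1, phi_ιMulti, detF_apply]
  set M : Matrix (Fin (2*ℓ)) (Fin (2*ℓ)) ℝ :=
    Matrix.of fun t u => itl (fun j => dxCov m (s j)) (fun j => dyCov m (s j)) t (vA a u) with hM
  set P : Matrix (Fin ℓ) (Fin ℓ) ℝ := Matrix.of fun j i => if s j = a i then 1 else 0 with hP
  have hsub : M.submatrix (pairEquiv ℓ) (pairEquiv ℓ)
      = Matrix.kroneckerMap (· * ·) P (1 : Matrix (Fin 2) (Fin 2) ℝ) := by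
    ext ⟨j, b⟩ ⟨i, c⟩
    simp only [Matrix.submatrix_apply, hM, Matrix.of_apply, vA, Matrix.kroneckerMap_apply]
    rw [itl_pairEquiv, itl_pairEquiv]
    rcases b with ⟨bv, hb⟩ <;> rcases c with ⟨cv, hc⟩
    interval_cases bv <;> interval_cases cv <;>
      simp [Matrix.one_apply, Fin.ext_iff, hP] <;> split <;> simp
  have hdet : M.det = P.det ^ 2 := by
    rw [← Matrix.det_submatrix_equiv_self (pairEquiv ℓ) M, hsub]
    rw [Matrix.det_kronecker]
    simp
  rw [hdet]
  by_cases him : Finset.image s Finset.univ = Finset.image a Finset.univ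
  · rw [if_pos him]
    -- build the permutation
    have hmem : ∀ j, ∃ i, a i = s j := by
      intro j
      have : s j ∈ Finset.image a Finset.univ := by
        rw [← him]; exact Finset.mem_image_of_mem s (Finset.mem_univ j)
      simpa using (Finset.mem_image.mp this).imp (fun i hi => hi.2)
    choose σ hσ using hmem
    have hσinj : Function.Injective σ := fun j j' h => by
      apply hs; rw [← hσ j, ← hσ j', h]
    have hσbij : Function.Bijective σ := (Finite.injective_iff_bijective).mp hσinj
    set e := Equiv.ofBijective σ hσbij with he
    have hPe : P = (e.toPEquiv).toMatrix := by
      ext j i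
      rw [hP, PEquiv.toMatrix_apply, Equiv.toPEquiv_apply]
      simp only [Matrix.of_apply, Option.mem_def, Option.some.injEq]
      have hiff : s j = a i ↔ e j = i := by
        rw [he]
        constructor
        · intro h
          apply ha
          rw [Equiv.ofBijective_apply, hσ, h]
        · intro h
          rw [← h, Equiv.ofBijective_apply, hσ]
      by_cases hc : s j = a i
      · rw [if_pos hc, if_pos (hiff.mp hc)]
      · rw [if_neg hc, if_neg (fun hh => hc (hiff.mpr hh))]
    have hd : P.det = (Equiv.Perm.sign e : ℤ) := by
      rw [hPe]
      exact_mod_cast Matrix.det_permutation e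
    rw [hd]
    rcases Int.units_eq_one_or (Equiv.Perm.sign e) with h | h <;> rw [h] <;> norm_num
  · rw [if_neg him]
    have hex : ∃ i, ∀ j, s j ≠ a i := by
      by_contra hc
      push_neg at hc
      refine him (Finset.eq_of_subset_of_card_le (fun x hx => ?_) (by
        rw [Finset.card_image_of_injective _ ha, Finset.card_image_of_injective _ hs])).symm
      rw [Finset.mem_image] at hx ⊢
      obtain ⟨i, -, rfl⟩ := hx
      obtain ⟨j, hj⟩ := hc i
      exact ⟨j, Finset.mem_univ j, hj⟩
    obtain ⟨i, hi⟩ := hex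
    have hz : P.det = 0 := Matrix.det_eq_zero_of_column_eq_zero i (fun j => by
      simp [hP, hi j])
    rw [hz]
    norm_num

/-! ### Expansion of `alphaCov` -/

attribute [local instance] Classical.propDecidable

variable {ℓ : ℕ}

def pickIdx (m ℓ : ℕ) (c : Fin ℓ → Bool) (j : Fin ℓ) : Fin ℓ ⊕ Fin (m - ℓ) :=
  if h : (j : ℕ) < m - ℓ ∧ c j = true then Sum.inr ⟨(j : ℕ), h.1⟩ else Sum.inl j

def sVal (R : StdYoungTableau m ℓ) (c : Fin ℓ → Bool) (j : Fin ℓ) : Fin m :=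
  Sum.elim R.r1 R.r2 (pickIdx m ℓ c j)

lemma pickIdx_inj (c : Fin ℓ → Bool) : Function.Injective (pickIdx m ℓ c) := by
  intro j j' h
  unfold pickIdx at h
  split at h <;> split at h <;> simp_all [Fin.ext_iff]

lemma sVal_inj (R : StdYoungTableau m ℓ) (c : Fin ℓ → Bool) :
    Function.Injective (sVal R c) :=
  fun _ _ h => pickIdx_inj c (R.inj h)

lemma sVal_ge (R : StdYoungTableau m ℓ) (c : Fin ℓ → Bool) (j : Fin ℓ) :
    (R.r1 j : ℕ) ≤ (sVal R c j : ℕ) := by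
  unfold sVal pickIdx
  split
  · next h => exact le_of_lt (R.col j ⟨(j : ℕ), h.1⟩ rfl)
  · exact le_refl _

lemma sVal_gt (R : StdYoungTableau m ℓ) (c : Fin ℓ → Bool) (j : Fin ℓ)
    (h1 : (j : ℕ) < m - ℓ) (h2 : c j = true) :
    (R.r1 j : ℕ) < (sVal R c j : ℕ) := by
  unfold sVal pickIdx
  rw [dif_pos ⟨h1, h2⟩]
  exact R.col j ⟨(j : ℕ), h1⟩ rfl

lemma sVal_eq (R : StdYoungTableau m ℓ) (c : Fin ℓ → Bool) (j : Fin ℓ)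
    (h : ¬((j : ℕ) < m - ℓ ∧ c j = true)) : sVal R c j = R.r1 j := by
  unfold sVal pickIdx
  rw [dif_neg h]
  rfl

def hfun (R : StdYoungTableau m ℓ) (j : Fin ℓ) : Bool → ExteriorAlgebra ℝ (CovectorSpace m)
  | true => if h : (j : ℕ) < m - ℓ then -(dxyCov m (R.r2 ⟨(j : ℕ), h⟩)) else 0
  | false => dxyCov m (R.r1 j)

lemma alpha_eq (R : StdYoungTableau m ℓ) :
    alphaCov m ℓ R = ∑ c : Fin ℓ → Bool, (List.ofFn fun j => hfun R j (c j)).prod := by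
  have hfn : (fun j : Fin ℓ =>
      if h : (j : ℕ) < m - ℓ then dxyCov m (R.r1 j) - dxyCov m (R.r2 ⟨(j : ℕ), h⟩)
      else dxyCov m (R.r1 j))
      = fun j => hfun R j true + hfun R j false := by
    funext j
    by_cases hj : (j : ℕ) < m - ℓ
    · rw [dif_pos hj]
      show _ = (if h : (j : ℕ) < m - ℓ then -(dxyCov m (R.r2 ⟨(j : ℕ), h⟩)) else 0)
          + dxyCov m (R.r1 j)
      rw [dif_pos hj, neg_add_eq_sub]
    · rw [dif_neg hj]
      show _ = (if h : (j : ℕ) < m - ℓ then -(dxyCov m (R.r2 ⟨(j : ℕ), h⟩)) else 0)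
          + dxyCov m (R.r1 j)
      rw [dif_neg hj, zero_add]
  unfold alphaCov
  rw [hfn, prod_ofFn_add]

lemma phi_term (R : StdYoungTableau m ℓ) (a : Fin ℓ → Fin m) (ha : Function.Injective a)
    (c : Fin ℓ → Bool) (hc : ∀ j, c j = true → (j : ℕ) < m - ℓ) :
    phi (vA a) ((List.ofFn fun j => hfun R j (c j)).prod)
      = (∏ j, if c j then (-1 : ℝ) else 1) *
        (if Finset.image (sVal R c) Finset.univ = Finset.image a Finset.univ
          then 1 else 0) := by
  have hrw : (fun j => hfun R j (c j))
      = fun j => (if c j then (-1 : ℝ) else 1) • dxyCov m (sVal R c j) := by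
    funext j
    cases hcj : c j with
    | false =>
      have : sVal R c j = R.r1 j := sVal_eq R c j (by simp [hcj])
      simp [hfun, this]
    | true =>
      have hj := hc j hcj
      have : sVal R c j = R.r2 ⟨(j : ℕ), hj⟩ := by
        unfold sVal pickIdx
        rw [dif_pos ⟨hj, hcj⟩]
        rfl
      simp [hfun, this, hj]
  rw [hrw, prod_ofFn_smul, map_smul, phi_monomial _ _ (sVal_inj R c) ha, smul_eq_mul]

lemma term_degenerate (R : StdYoungTableau m ℓ) (c : Fin ℓ → Bool) (j₀ : Fin ℓ)
    (h1 : c j₀ = true) (h2 : ¬((j₀ : ℕ) < m - ℓ)) :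
    (List.ofFn fun j => hfun R j (c j)).prod = 0 := by
  apply List.prod_eq_zero
  rw [List.mem_ofFn]
  refine ⟨j₀, ?_⟩
  show hfun R j₀ (c j₀) = 0
  rw [h1]
  show (if h : (j₀ : ℕ) < m - ℓ then -(dxyCov m (R.r2 ⟨(j₀ : ℕ), h⟩)) else 0) = 0
  rw [dif_neg h2]

/-! ### Tableaux are determined by the first row -/

lemma strictMono_image_eq {k : ℕ} (f g : Fin k → Fin m) (hf : StrictMono f)
    (hg : StrictMono g)
    (h : Finset.image f Finset.univ = Finset.image g Finset.univ) : f = g := by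
  have hcf : (Finset.image f Finset.univ).card = k := by
    rw [Finset.card_image_of_injective _ hf.injective, Finset.card_univ, Fintype.card_fin]
  have h1 : f = (Finset.image f Finset.univ).orderEmbOfFin hcf :=
    Finset.orderEmbOfFin_unique hcf (fun x => Finset.mem_image_of_mem f (Finset.mem_univ x)) hf
  have h2 : g = (Finset.image f Finset.univ).orderEmbOfFin hcf :=
    Finset.orderEmbOfFin_unique hcf
      (fun x => by rw [h]; exact Finset.mem_image_of_mem g (Finset.mem_univ x)) hg
  rw [h1, h2]

lemma image_r2 (hℓm : ℓ ≤ m) (R : StdYoungTableau m ℓ) :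
    Finset.image R.r2 Finset.univ = Finset.univ \ Finset.image R.r1 Finset.univ := by
  apply Finset.eq_of_subset_of_card_le
  · intro x hx
    rw [Finset.mem_image] at hx
    obtain ⟨j, -, rfl⟩ := hx
    rw [Finset.mem_sdiff]
    refine ⟨Finset.mem_univ _, ?_⟩
    rw [Finset.mem_image]
    rintro ⟨i, -, hi⟩
    have := R.inj (a₁ := Sum.inl i) (a₂ := Sum.inr j) hi
    exact absurd this (by simp)
  · rw [Finset.card_sdiff_of_subset (Finset.subset_univ _), Finset.card_univ, Fintype.card_fin,
      Finset.card_image_of_injective _ R.mono1.injective,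
      Finset.card_image_of_injective _ R.mono2.injective, Finset.card_univ, Finset.card_univ,
      Fintype.card_fin, Fintype.card_fin]

lemma tableau_ext (hℓm : ℓ ≤ m) (R R' : StdYoungTableau m ℓ)
    (h1 : Finset.image R.r1 Finset.univ = Finset.image R'.r1 Finset.univ) : R = R' := by
  have e1 : R.r1 = R'.r1 := strictMono_image_eq _ _ R.mono1 R'.mono1 h1
  have e2 : R.r2 = R'.r2 := by
    refine strictMono_image_eq _ _ R.mono2 R'.mono2 ?_
    rw [image_r2 hℓm, image_r2 hℓm, h1]
  cases R; cases R'
  cases e1; cases e2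
  rfl

/-! ### The main evaluation -/

def wgt (R : StdYoungTableau m ℓ) : ℕ := ∑ j, (R.r1 j : ℕ)

lemma sum_image_inj (f : Fin ℓ → Fin m) (hf : Function.Injective f) :
    ∑ x ∈ Finset.image f Finset.univ, (x : ℕ) = ∑ j, (f j : ℕ) :=
  Finset.sum_image (fun x _ y _ h => hf h)

lemma phi_alpha (hℓm : ℓ ≤ m) (R R₀ : StdYoungTableau m ℓ) (hw : wgt R₀ ≤ wgt R) :
    phi (vA R₀.r1) (alphaCov m ℓ R) = if R = R₀ then 1 else 0 := by
  rw [alpha_eq, map_sum]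
  have key : ∀ c : Fin ℓ → Bool,
      phi (vA R₀.r1) ((List.ofFn fun j => hfun R j (c j)).prod)
        = if c = (fun _ => false) ∧ R = R₀ then 1 else 0 := by
    intro c
    by_cases hc : ∀ j, c j = true → (j : ℕ) < m - ℓ
    · rw [phi_term R R₀.r1 R₀.mono1.injective c hc]
      by_cases him : Finset.image (sVal R c) Finset.univ
          = Finset.image R₀.r1 Finset.univ
      · have hsum : ∑ j, (sVal R c j : ℕ) = wgt R₀ := by
          rw [← sum_image_inj _ (sVal_inj R c), him, sum_image_inj _ R₀.mono1.injective]
          rfl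
        have hcf : ∀ j, c j = false := by
          by_contra hcc
          push_neg at hcc
          obtain ⟨j₀, hj₀⟩ := hcc
          have hj₀t : c j₀ = true := by
            cases hcj : c j₀
            · exact absurd hcj hj₀
            · rfl
          have hlt : wgt R < ∑ j, (sVal R c j : ℕ) :=
            Finset.sum_lt_sum (fun j _ => sVal_ge R c j)
              ⟨j₀, Finset.mem_univ _, sVal_gt R c j₀ (hc j₀ hj₀t) hj₀t⟩
          omega
        have hsceq : sVal R c = R.r1 := funext fun j => sVal_eq R c j (by simp [hcf j])
        have hR : R = R₀ := tableau_ext hℓm R R₀ (by rw [← hsceq, him])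
        rw [if_pos him, if_pos ⟨funext hcf, hR⟩, mul_one]
        exact Finset.prod_eq_one (fun j _ => by simp [hcf j])
      · rw [if_neg him, mul_zero, if_neg]
        rintro ⟨hcf, hR⟩
        apply him
        have hsceq : sVal R c = R.r1 := funext fun j => sVal_eq R c j (by
          rw [congrFun hcf j]; simp)
        rw [hsceq, hR]
    · push_neg at hc
      obtain ⟨j₀, h1, h2⟩ := hc
      rw [term_degenerate R c j₀ h1 (by omega), map_zero, if_neg]
      rintro ⟨hcf, -⟩
      rw [congrFun hcf j₀] at h1
      exact Bool.false_ne_true h1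
  rw [Finset.sum_congr rfl (fun c _ => key c)]
  by_cases hR : R = R₀
  · simp only [hR, and_true]
    rw [Finset.sum_ite_eq' Finset.univ (fun _ => false) (fun _ => (1 : ℝ))]
    simp
  · simp [hR]

end AlphaPf

/-- For `1 ≤ m ≤ 2ℓ ≤ 2m`, the family of covectors `α_R` on `ℝ^{2m}`, indexed
by the standard Young tableaux `R` with two rows of lengths `ℓ` and `m - ℓ` filled with
`1, …, m`, is linearly independent. -/
theorem alphaCov_linearIndependent
    (m ℓ : ℕ) (hm : 1 ≤ m) (hmℓ : m ≤ 2 * ℓ) (hℓm : ℓ ≤ m) :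
    LinearIndependent ℝ (fun R : StdYoungTableau m ℓ => alphaCov m ℓ R) := by
  classical
  rw [linearIndependent_iff']
  intro S g hsum
  suffices H : ∀ n (R₀ : StdYoungTableau m ℓ), R₀ ∈ S → AlphaPf.wgt R₀ = n → g R₀ = 0 by
    intro R₀ hR₀
    exact H _ R₀ hR₀ rfl
  intro n
  induction n using Nat.strong_induction_on with
  | _ n IH =>
    intro R₀ hR₀ hn
    have h0 : ∑ R ∈ S, g R * AlphaPf.phi (AlphaPf.vA R₀.r1) (alphaCov m ℓ R) = 0 := by
      have h := congrArg (AlphaPf.phi (AlphaPf.vA R₀.r1)) hsum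
      rw [map_sum, map_zero] at h
      simpa [smul_eq_mul] using h
    have hterm : ∀ R ∈ S,
        g R * AlphaPf.phi (AlphaPf.vA R₀.r1) (alphaCov m ℓ R)
          = if R = R₀ then g R₀ else 0 := by
      intro R hR
      rcases lt_or_ge (AlphaPf.wgt R) n with hlt | hge
      · rw [IH (AlphaPf.wgt R) (by omega) R hR rfl, zero_mul]
        by_cases hRR : R = R₀
        · rw [hRR] at hlt
          omega
        · rw [if_neg hRR]
      · rw [AlphaPf.phi_alpha hℓm R R₀ (by omega)]
        by_cases hRR : R = R₀
        · rw [if_pos hRR, if_pos hRR, mul_one, hRR]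
        · rw [if_neg hRR, if_neg hRR, mul_zero]
    rw [Finset.sum_congr rfl hterm, Finset.sum_ite_eq' S R₀ (fun _ => g R₀),
      if_pos hR₀] at h0
    exact h0
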